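/- The product Π(G) = τ(e_m)τ(e_{m-1})⋯τ(e_1)π_0 does not depend on the chosen valid linear ordering e_1 > ⋯ > e_m of the edge set E of a graph G on [n]. Here a linear ordering of E is valid if e ⪯ e' implies e ≤ e'. -/

import Mathlib

/-- A graph on vertex set `[n]` (vertices `Fin n` in increasing order) is terrain-like
if it satisfies the X-property. -/
def TerrainLike {n : ℕ} (G : SimpleGraph (Fin n)) : Prop :=
  ∀ a b c d : Fin n, a < b → b < c → c < d → G.Adj a c → G.Adj b d → G.Adj a d

/-- The order `⪯` on pairs `(a,b)` with `a < b`: `{a,b} ⪯ {c,d}` iff `c ≤ a < b ≤ d`. -/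
def PairLE {n : ℕ} (e f : Fin n × Fin n) : Prop :=
  f.1 ≤ e.1 ∧ e.2 ≤ f.2

/-- `τ({a,b})` is the transposition `(2a, 2b-1)` of `[2n]`; here vertices and the
elements of `[2n]` are 0-indexed, so it swaps the 0-based positions `2a+1` and `2b`. -/
def tau {n : ℕ} (e : Fin n × Fin n) : Equiv.Perm (Fin (2 * n)) :=
  Equiv.swap ⟨2 * e.1.val + 1, by have := e.1.isLt; omega⟩
    ⟨2 * e.2.val, by have := e.2.isLt; omega⟩

/-- `π₀ = (1,2)(3,4)⋯(2n-1,2n)` (0-indexed: swaps `2i` and `2i+1` for each `i < n`). -/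
def pi0 (n : ℕ) : Equiv.Perm (Fin (2 * n)) :=
  (List.ofFn (fun i : Fin n =>
    Equiv.swap ⟨2 * i.val, by have := i.isLt; omega⟩
      ⟨2 * i.val + 1, by have := i.isLt; omega⟩)).prod

/-- Dumont derangements of the second kind, on `Fin (2*n)` (0-indexed version of `[2n]`):
`π(2i-1) ≥ 2i-1`, `π(2i) < 2i` for `i ∈ [n]`, and `π(2i-1) > 2i-1` for `i ∈ [n-1]`. -/
def IsDumontDerangement {n : ℕ} (π : Equiv.Perm (Fin (2 * n))) : Prop :=
  (∀ i : Fin (2 * n), i.val % 2 = 0 → i.val ≤ (π i).val) ∧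
  (∀ i : Fin (2 * n), i.val % 2 = 1 → (π i).val < i.val) ∧
  (∀ i : Fin (2 * n), i.val % 2 = 0 → i.val < 2 * n - 2 → i.val < (π i).val)

/-- `i` and `j` are in edge configuration in `π` iff
`π⁻¹(i) < π⁻¹(j) ⟺ π⁻¹(i) ≡ π⁻¹(j) (mod 2)`. -/
def EdgeConfig {m : ℕ} (π : Equiv.Perm (Fin m)) (i j : Fin m) : Prop :=
  (π.symm i).val < (π.symm j).val ↔ (π.symm i).val % 2 = (π.symm j).val % 2

/-- A list `e₁ > ⋯ > e_m` of the edges of `G` (as pairs `(a,b)`, `a < b`), ordered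
descendingly with respect to a valid linear order (one extending `⪯`): no earlier
element is `⪯`-below a later one. -/
def ValidEdgeList {n : ℕ} (G : SimpleGraph (Fin n)) (l : List (Fin n × Fin n)) : Prop :=
  l.Nodup ∧ (∀ e : Fin n × Fin n, e ∈ l ↔ (e.1 < e.2 ∧ G.Adj e.1 e.2)) ∧
  l.Pairwise (fun e f => ¬ PairLE e f)

/-- `Π(G) = τ(e_m)⋯τ(e₁)π₀` for an edge list `[e₁,…,e_m]`. -/

lemma tau_commute {n : ℕ} (x y : Fin n × Fin n) (h1 : ¬ PairLE x y) (h2 : ¬ PairLE y x) :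
    Commute (tau x) (tau y) := by
  have hx1 : x.1.val ≠ y.1.val := by
    intro h
    simp only [PairLE, not_and, not_le] at h1 h2
    have e : x.1 = y.1 := Fin.ext h
    have := h1 (le_of_eq e.symm); have := h2 (le_of_eq e)
    omega
  have hx2 : x.2.val ≠ y.2.val := by
    intro h
    simp only [PairLE, not_and, not_le] at h1 h2
    have e : x.2 = y.2 := Fin.ext h
    rcases le_or_gt y.1 x.1 with hle | hlt
    · exact absurd (le_of_eq e) (not_le.mpr (h1 hle))
    · exact absurd (le_of_eq e.symm) (not_le.mpr (h2 hlt.le))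
  have hd : (tau x).Disjoint (tau y) := by
    intro z
    by_cases hz : tau x z = z
    · left; exact hz
    · right
      have hz' : z.val = 2 * x.1.val + 1 ∨ z.val = 2 * x.2.val := by
        by_contra hc
        push_neg at hc
        exact hz (Equiv.swap_apply_of_ne_of_ne
          (fun h => hc.1 (congrArg Fin.val h)) (fun h => hc.2 (congrArg Fin.val h)))
      exact Equiv.swap_apply_of_ne_of_ne
        (fun h => by have := congrArg Fin.val h; simp only [] at this; omega)
        (fun h => by have := congrArg Fin.val h; simp only [] at this; omega)
  exact hd.commute


lemma prod_eq_of_perm {α M : Type*} [Monoid M] (g : α → M) (R : α → α → Prop)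
    (hcomm : ∀ x y, ¬ R x y → ¬ R y x → Commute (g x) (g y)) :
    ∀ l₁ l₂ : List α, l₁.Nodup → l₂.Nodup → (∀ x, x ∈ l₁ ↔ x ∈ l₂) →
      l₁.Pairwise (fun e f => ¬ R e f) → l₂.Pairwise (fun e f => ¬ R e f) →
      (l₁.map g).prod = (l₂.map g).prod := by
  intro l₁
  induction l₁ with
  | nil => intro l₂ _ _ hmem _ _
           have : l₂ = [] := List.eq_nil_iff_forall_not_mem.mpr (fun x hx => by
             simpa using (hmem x).mpr hx)
           simp [this]
  | cons a t ih =>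
    intro l₂ hn₁ hn₂ hmem hp₁ hp₂
    have ha : a ∈ l₂ := (hmem a).mp List.mem_cons_self
    obtain ⟨u, v, rfl⟩ := List.append_of_mem ha
    have hn₂' := List.nodup_append.mp hn₂
    have hat : a ∉ t := (List.nodup_cons.mp hn₁).1
    have hau : a ∉ u := fun h => hn₂'.2.2 a h a List.mem_cons_self rfl
    have hav : a ∉ v := (List.nodup_cons.mp hn₂'.2.1).1
    have hcomm_u : ∀ x ∈ List.map g u, Commute (g a) x := by
      intro gx hgx
      obtain ⟨x, hxu, rfl⟩ := List.mem_map.mp hgx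
      have hxa : x ≠ a := fun h => hau (h ▸ hxu)
      have hxt : x ∈ t := by
        have := (hmem x).mpr (List.mem_append_left _ hxu)
        rcases List.mem_cons.mp this with h | h
        · exact absurd h hxa
        · exact h
      have h1 : ¬ R a x := (List.pairwise_cons.mp hp₁).1 x hxt
      have h2 : ¬ R x a :=
        (List.pairwise_append.mp hp₂).2.2 x hxu a List.mem_cons_self
      exact hcomm a x h1 h2
    have hc : Commute (g a) ((u.map g).prod) := Commute.list_prod_right _ _ hcomm_u
    have key : ((u ++ a :: v).map g).prod = g a * ((u ++ v).map g).prod := by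
      simp only [List.map_append, List.prod_append, List.map_cons, List.prod_cons]
      rw [← mul_assoc, ← hc.eq, mul_assoc]
    rw [key, List.map_cons, List.prod_cons]
    congr 1
    apply ih (u ++ v)
    · exact (List.nodup_cons.mp hn₁).2
    · exact List.Nodup.sublist (by simp) hn₂
    · intro x
      constructor
      · intro hx
        have hxa : x ≠ a := fun h => hat (h ▸ hx)
        have := (hmem x).mp (List.mem_cons_of_mem a hx)
        rcases List.mem_append.mp this with h | h
        · exact List.mem_append_left _ h
        · rcases List.mem_cons.mp h with h2 | h
          · exact absurd h2 hxa
          · exact List.mem_append_right _ h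
      · intro hx
        have hxa : x ≠ a := by
          rintro rfl
          rcases List.mem_append.mp hx with h | h
          · exact hau h
          · exact hav h
        have hxl₂ : x ∈ u ++ a :: v := by
          rcases List.mem_append.mp hx with h | h
          · exact List.mem_append_left _ h
          · exact List.mem_append_right _ (List.mem_cons_of_mem a h)
        rcases List.mem_cons.mp ((hmem x).mpr hxl₂) with h | h
        · exact absurd h hxa
        · exact h
    · exact (List.pairwise_cons.mp hp₁).2
    · exact List.Pairwise.sublist (by simp) hp₂

def permOfList {n : ℕ} (l : List (Fin n × Fin n)) : Equiv.Perm (Fin (2 * n)) :=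
  (l.reverse.map tau).prod * pi0 n

/-- `Π(G)` is well-defined: it does not depend on the chosen valid ordering of the edges. -/
theorem permOfList_well_defined {n : ℕ} (G : SimpleGraph (Fin n))
    (l₁ l₂ : List (Fin n × Fin n))
    (h₁ : ValidEdgeList G l₁) (h₂ : ValidEdgeList G l₂) :
    permOfList l₁ = permOfList l₂ := by
  unfold permOfList
  congr 1
  obtain ⟨hn₁, hm₁, hp₁⟩ := h₁
  obtain ⟨hn₂, hm₂, hp₂⟩ := h₂
  apply prod_eq_of_perm tau (fun e f => PairLE f e)
    (fun x y hxy hyx => tau_commute x y hyx hxy)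
  · exact List.nodup_reverse.mpr hn₁
  · exact List.nodup_reverse.mpr hn₂
  · intro x; rw [List.mem_reverse, List.mem_reverse, hm₁, hm₂]
  · exact List.pairwise_reverse.mpr hp₁
  · exact List.pairwise_reverse.mpr hp₂
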